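/- arXiv:2601.09074 — 2 statements merged into one kernel-verified Lean document; each statement's English description precedes it below -/
import Mathlib

section
/- For every real number r > 1 there exist positive constants b_r and B_r such that for every natural number N, b_r^r (2N+1)^{r-1} ≤ ∫_{-π}^{π} |D_N(s)|^r ds ≤ B_r^r (2N+1)^{r-1}, where D_N(t) = Σ_{|l| ≤ N} e^{i l t} is the Dirichlet kernel. -/
open Real MeasureTheory

/-- The Dirichlet kernel with `2N+1` harmonics. -/
noncomputable def dirichlet (N : ℕ) (t : ℝ) : ℂ :=
  ∑ l ∈ Finset.Icc (-(N : ℤ)) (N : ℤ), Complex.exp (Complex.I * l * t)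

lemma dirichlet_continuous (N : ℕ) : Continuous (dirichlet N) := by
  unfold dirichlet
  exact continuous_finset_sum _ fun l _ => Complex.continuous_exp.comp (by fun_prop)

lemma norm_dirichlet_le (N : ℕ) (t : ℝ) : ‖dirichlet N t‖ ≤ 2 * N + 1 := by
  refine (norm_sum_le _ _).trans ?_
  have h2 : ∀ l ∈ Finset.Icc (-(N : ℤ)) (N : ℤ), ‖Complex.exp (Complex.I * l * t)‖ = 1 := by
    intro l _
    rw [Complex.norm_exp]
    have : (Complex.I * l * t).re = 0 := by simp
    simp [this]
  rw [Finset.sum_congr rfl h2, Finset.sum_const, Int.card_Icc, nsmul_eq_mul, mul_one]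
  have hcard : ((N:ℤ) + 1 - -(N:ℤ)).toNat = 2 * N + 1 := by omega
  rw [hcard]
  push_cast
  linarith

lemma dirichlet_eq (N : ℕ) (t : ℝ) :
    dirichlet N t = Complex.exp (-(Complex.I * N * t)) *
      ∑ k ∈ Finset.range (2 * N + 1), Complex.exp (Complex.I * t) ^ k := by
  unfold dirichlet
  rw [Finset.mul_sum]
  have hmap : Finset.Icc (-(N : ℤ)) (N : ℤ) =
      (Finset.range (2 * N + 1)).map ⟨fun k : ℕ => (k : ℤ) - N, fun a b h => by
        simp only at h; omega⟩ := by
    ext a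
    simp only [Finset.mem_Icc, Finset.mem_map, Finset.mem_range, Function.Embedding.coeFn_mk]
    show _ ↔ ∃ k, k < 2 * N + 1 ∧ (k : ℤ) - N = a
    constructor
    · rintro ⟨h1, h2⟩
      exact ⟨(a + N).toNat, by omega, by omega⟩
    · rintro ⟨k, hk, rfl⟩
      omega
  rw [hmap, Finset.sum_map]
  refine Finset.sum_congr rfl fun k _ => ?_
  show Complex.exp (Complex.I * ((((k : ℤ) - N : ℤ)) : ℂ) * t) = _
  rw [← Complex.exp_nat_mul, ← Complex.exp_add]
  congr 1
  push_cast
  ring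

lemma dirichlet_mul (N : ℕ) (t : ℝ) :
    dirichlet N t * (Complex.exp (Complex.I * t) - 1) =
      Complex.exp (-(Complex.I * N * t)) * (Complex.exp (Complex.I * t) ^ (2 * N + 1) - 1) := by
  rw [dirichlet_eq, mul_assoc, geom_sum_mul]

lemma norm_exp_mul_I_sub_one (t : ℝ) :
    ‖Complex.exp (Complex.I * t) - 1‖ = 2 * |sin (t / 2)| := by
  have hre : (Complex.exp (Complex.I * t) - 1).re = cos t - 1 := by
    rw [mul_comm]
    simp [Complex.exp_ofReal_mul_I_re]
  have him : (Complex.exp (Complex.I * t) - 1).im = sin t := by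
    rw [mul_comm]
    simp [Complex.exp_ofReal_mul_I_im]
  rw [Complex.norm_def, Complex.normSq_apply, hre, him]
  have h1 : (cos t - 1) * (cos t - 1) + sin t * sin t = (2 * |sin (t/2)|) ^ 2 := by
    have h2 : sin (t/2) ^ 2 = 1/2 - cos (2 * (t/2)) / 2 := Real.sin_sq_eq_half_sub (t/2)
    have h3 : sin t ^ 2 + cos t ^ 2 = 1 := Real.sin_sq_add_cos_sq t
    have : (2 * |sin (t/2)|) ^ 2 = 4 * sin (t/2) ^ 2 := by
      rw [mul_pow, sq_abs]; ring
    rw [this, h2]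
    have : (2 : ℝ) * (t/2) = t := by ring
    rw [this]
    nlinarith
  rw [h1, Real.sqrt_sq (by positivity)]

lemma norm_dirichlet_le_pi_div (N : ℕ) (t : ℝ) (ht : |t| ≤ π) (ht0 : t ≠ 0) :
    ‖dirichlet N t‖ ≤ π / |t| := by
  have habs : |t| / 2 ≤ π / 2 := by linarith
  have hsin : 2 / π * |t/2| ≤ |sin (t/2)| := by
    apply Real.mul_abs_le_abs_sin
    rw [abs_div, abs_two]
    exact habs
  have hsin' : |t| / π ≤ |sin (t/2)| := by
    rw [abs_div, abs_two] at hsin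
    calc |t| / π = 2 / π * (|t| / 2) := by field_simp
    _ ≤ |sin (t/2)| := hsin
  have hd : ‖Complex.exp (Complex.I * t) - 1‖ = 2 * |sin (t/2)| := norm_exp_mul_I_sub_one t
  have hdpos : 0 < |sin (t/2)| := lt_of_lt_of_le (by positivity) hsin'
  have key := congrArg norm (dirichlet_mul N t)
  rw [norm_mul, norm_mul, hd] at key
  have h1 : ‖Complex.exp (-(Complex.I * N * t))‖ = 1 := by
    rw [Complex.norm_exp]
    have : (-(Complex.I * N * t)).re = 0 := by simp
    simp [this]
  have h2 : ‖Complex.exp (Complex.I * t) ^ (2*N+1) - 1‖ ≤ 2 := by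
    refine (norm_sub_le _ _).trans ?_
    rw [norm_pow]
    have : ‖Complex.exp (Complex.I * t)‖ = 1 := by
      rw [Complex.norm_exp]
      have : (Complex.I * (t:ℂ)).re = 0 := by simp
      simp [this]
    rw [this]
    norm_num
  rw [h1, one_mul] at key
  have : ‖dirichlet N t‖ * (2 * |sin (t/2)|) ≤ 2 := key ▸ h2
  have h3 : ‖dirichlet N t‖ ≤ 1 / |sin (t/2)| := by
    rw [le_div_iff₀ hdpos]
    linarith
  refine h3.trans ?_
  rw [div_le_div_iff₀ hdpos (abs_pos.mpr ht0)]
  calc 1 * |t| = π * (|t| / π) := by field_simp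
  _ ≤ π * |sin (t/2)| := by
      exact mul_le_mul_of_nonneg_left hsin' pi_pos.le

lemma dirichlet_neg (N : ℕ) (t : ℝ) : dirichlet N (-t) = (starRingEnd ℂ) (dirichlet N t) := by
  unfold dirichlet
  rw [map_sum]
  refine Finset.sum_congr rfl fun l _ => ?_
  rw [← Complex.exp_conj]
  congr 1
  simp only [map_mul, Complex.conj_I, map_intCast, Complex.conj_ofReal]
  push_cast
  ring

lemma norm_dirichlet_neg (N : ℕ) (t : ℝ) : ‖dirichlet N (-t)‖ = ‖dirichlet N t‖ := by
  rw [dirichlet_neg]; exact RCLike.norm_conj _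

lemma re_dirichlet_ge (N : ℕ) (t : ℝ) (ht : |t| ≤ 1 / (2 * N + 1)) :
    (2 * N + 1 : ℝ) * cos (1/2) ≤ ‖dirichlet N t‖ := by
  have hre : (dirichlet N t).re = ∑ l ∈ Finset.Icc (-(N : ℤ)) (N : ℤ), cos (l * t) := by
    unfold dirichlet
    rw [Complex.re_sum]
    refine Finset.sum_congr rfl fun l _ => ?_
    have : Complex.I * l * t = ((l * t : ℝ) : ℂ) * Complex.I := by push_cast; ring
    rw [this, Complex.exp_ofReal_mul_I_re]
  have hbound : ∀ l ∈ Finset.Icc (-(N : ℤ)) (N : ℤ), cos (1/2) ≤ cos (l * t) := by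
    intro l hl
    rw [Finset.mem_Icc] at hl
    have hlt : |(l : ℝ) * t| ≤ 1/2 := by
      rw [abs_mul]
      have h1 : |(l : ℝ)| ≤ N := by
        rw [abs_le]
        constructor
        · exact_mod_cast hl.1
        · exact_mod_cast hl.2
      have h2 : (0:ℝ) < 2 * N + 1 := by positivity
      calc |(l:ℝ)| * |t| ≤ N * (1 / (2 * N + 1)) :=
            mul_le_mul h1 ht (abs_nonneg _) (Nat.cast_nonneg _)
      _ ≤ 1/2 := by rw [mul_one_div, div_le_div_iff₀ h2 two_pos]; linarith
    rw [← Real.cos_abs ((l:ℝ) * t)]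
    apply Real.cos_le_cos_of_nonneg_of_le_pi (abs_nonneg _)
    · linarith [Real.pi_gt_three]
    · exact hlt
  have hsum : (2 * N + 1 : ℝ) * cos (1/2) ≤ (dirichlet N t).re := by
    rw [hre]
    have h := Finset.card_nsmul_le_sum (Finset.Icc (-(N : ℤ)) (N : ℤ))
      (fun l => cos ((l:ℝ) * t)) (cos (1/2)) hbound
    rw [Int.card_Icc] at h
    have hcard : ((N:ℤ) + 1 - -(N:ℤ)).toNat = 2 * N + 1 := by omega
    rw [hcard, nsmul_eq_mul] at h
    calc (2 * N + 1 : ℝ) * cos (1/2) = ((2 * N + 1 : ℕ) : ℝ) * cos (1/2) := by push_cast; ring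
    _ ≤ _ := h
  exact hsum.trans (Complex.re_le_norm _)

theorem stmt0 (r : ℝ) (hr : 1 < r) :
    ∃ b B : ℝ, 0 < b ∧ 0 < B ∧ ∀ N : ℕ,
      (b ^ r * (2 * (N : ℝ) + 1) ^ (r - 1) ≤ ∫ s in (-π)..π, ‖dirichlet N s‖ ^ r) ∧
      (∫ s in (-π)..π, ‖dirichlet N s‖ ^ r) ≤ B ^ r * (2 * (N : ℝ) + 1) ^ (r - 1) := by
  have hr0 : (0:ℝ) < r := by linarith
  have hrne : r ≠ 0 := ne_of_gt hr0
  have hr1 : (0:ℝ) < r - 1 := by linarith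
  have hπr : (0:ℝ) < π ^ r := Real.rpow_pos_of_pos pi_pos r
  set C : ℝ := 2 + 2 * π ^ r / (r - 1) with hC
  have hCpos : 0 < C := by positivity
  have hcos : 0 < cos (1/2) := Real.cos_pos_of_mem_Ioo
    ⟨by linarith [Real.pi_gt_three], by linarith [Real.pi_gt_three]⟩
  refine ⟨cos (1/2), C ^ r⁻¹, hcos, Real.rpow_pos_of_pos hCpos _, fun N => ?_⟩
  set δ : ℝ := 1 / (2 * (N:ℝ) + 1) with hδ
  have hM : (0:ℝ) < 2 * (N:ℝ) + 1 := by positivity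
  have hδpos : 0 < δ := by positivity
  have hδ1 : δ ≤ 1 := by
    rw [hδ, div_le_one hM]
    have : (0:ℝ) ≤ (N:ℝ) := Nat.cast_nonneg N
    linarith
  have hδπ : δ ≤ π := hδ1.trans (by linarith [Real.pi_gt_three])
  have hcont : Continuous fun s => ‖dirichlet N s‖ ^ r :=
    ((dirichlet_continuous N).norm).rpow_const fun x => Or.inr hr0.le
  have hint : ∀ a b : ℝ, IntervalIntegrable (fun s => ‖dirichlet N s‖ ^ r) volume a b :=
    fun a b => hcont.intervalIntegrable a b
  have hnonneg : ∀ s : ℝ, 0 ≤ ‖dirichlet N s‖ ^ r :=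
    fun s => Real.rpow_nonneg (norm_nonneg _) r
  have hδpow : δ * (2 * (N:ℝ) + 1) ^ r = (2 * (N:ℝ) + 1) ^ (r - 1) := by
    rw [hδ, one_div, inv_mul_eq_div, Real.rpow_sub hM, Real.rpow_one]
  have hsplit : (∫ s in (-π)..π, ‖dirichlet N s‖ ^ r)
      = (∫ s in (-π)..(-δ), ‖dirichlet N s‖ ^ r) + (∫ s in (-δ)..δ, ‖dirichlet N s‖ ^ r)
        + (∫ s in δ..π, ‖dirichlet N s‖ ^ r) := by
    have h1 := intervalIntegral.integral_add_adjacent_intervals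
      (hint (-π) (-δ)) (hint (-δ) δ)
    have h2 := intervalIntegral.integral_add_adjacent_intervals
      (hint (-π) δ) (hint δ π)
    rw [← h2, ← h1]
  have hleft : (∫ s in (-π)..(-δ), ‖dirichlet N s‖ ^ r)
      = ∫ s in δ..π, ‖dirichlet N s‖ ^ r := by
    have h := intervalIntegral.integral_comp_neg (a := δ) (b := π)
      (fun s => ‖dirichlet N s‖ ^ r)
    simp only [norm_dirichlet_neg] at h
    exact h.symm
  constructor
  · -- lower bound
    have hmid_lower : 2 * δ * ((2 * (N:ℝ) + 1) * cos (1/2)) ^ r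
        ≤ ∫ s in (-δ)..δ, ‖dirichlet N s‖ ^ r := by
      have hc : ∀ s ∈ Set.Icc (-δ) δ,
          ((2 * (N:ℝ) + 1) * cos (1/2)) ^ r ≤ ‖dirichlet N s‖ ^ r := by
        intro s hs
        apply Real.rpow_le_rpow (by positivity) _ hr0.le
        apply re_dirichlet_ge
        rw [abs_le]
        exact ⟨hs.1, hs.2⟩
      calc 2 * δ * ((2 * (N:ℝ) + 1) * cos (1/2)) ^ r
          = ∫ _ in (-δ)..δ, ((2 * (N:ℝ) + 1) * cos (1/2)) ^ r := by
            rw [intervalIntegral.integral_const, smul_eq_mul]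
            ring
        _ ≤ _ := intervalIntegral.integral_mono_on (by linarith)
            intervalIntegrable_const (hint _ _) hc
    have hside1 : 0 ≤ ∫ s in (-π)..(-δ), ‖dirichlet N s‖ ^ r :=
      intervalIntegral.integral_nonneg (by linarith) (fun u _ => hnonneg u)
    have hside2 : 0 ≤ ∫ s in δ..π, ‖dirichlet N s‖ ^ r :=
      intervalIntegral.integral_nonneg (by linarith) (fun u _ => hnonneg u)
    have e1 : ((2 * (N:ℝ) + 1) * cos (1/2)) ^ r
        = (2 * (N:ℝ) + 1) ^ r * cos (1/2) ^ r := Real.mul_rpow hM.le hcos.le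
    have key : cos (1/2) ^ r * (2 * (N:ℝ) + 1) ^ (r - 1)
        ≤ 2 * δ * ((2 * (N:ℝ) + 1) * cos (1/2)) ^ r := by
      rw [e1, show 2 * δ * ((2 * (N:ℝ) + 1) ^ r * cos (1/2) ^ r)
        = 2 * (δ * (2 * (N:ℝ) + 1) ^ r) * cos (1/2) ^ r by ring, hδpow]
      have hA : 0 ≤ (2 * (N:ℝ) + 1) ^ (r - 1) := Real.rpow_nonneg hM.le _
      have hB : 0 ≤ cos (1/2) ^ r := Real.rpow_nonneg hcos.le _
      nlinarith
    rw [hsplit]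
    linarith
  · -- upper bound
    have hmid_up : (∫ s in (-δ)..δ, ‖dirichlet N s‖ ^ r)
        ≤ 2 * (2 * (N:ℝ) + 1) ^ (r - 1) := by
      have h1 : (∫ s in (-δ)..δ, ‖dirichlet N s‖ ^ r)
          ≤ ∫ _ in (-δ)..δ, (2 * (N:ℝ) + 1) ^ r :=
        intervalIntegral.integral_mono_on (by linarith) (hint _ _)
          intervalIntegrable_const (fun s _ =>
            Real.rpow_le_rpow (norm_nonneg _) (norm_dirichlet_le N s) hr0.le)
      refine h1.trans ?_
      rw [intervalIntegral.integral_const, smul_eq_mul,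
        show (δ - -δ) * (2 * (N:ℝ) + 1) ^ r = 2 * (δ * (2 * (N:ℝ) + 1) ^ r) by ring, hδpow]
    have hright : (∫ s in δ..π, ‖dirichlet N s‖ ^ r)
        ≤ π ^ r * (2 * (N:ℝ) + 1) ^ (r - 1) / (r - 1) := by
      have hptwise : ∀ s ∈ Set.Icc δ π, ‖dirichlet N s‖ ^ r ≤ π ^ r * s ^ (-r) := by
        intro s hs
        have hs0 : 0 < s := hδpos.trans_le hs.1
        have h := norm_dirichlet_le_pi_div N s (by rw [abs_of_pos hs0]; exact hs.2) hs0.ne'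
        rw [abs_of_pos hs0] at h
        have h2 : ‖dirichlet N s‖ ^ r ≤ (π / s) ^ r :=
          Real.rpow_le_rpow (norm_nonneg _) h hr0.le
        refine h2.trans_eq ?_
        rw [Real.div_rpow pi_pos.le hs0.le, Real.rpow_neg hs0.le, div_eq_mul_inv]
      have hintg : IntervalIntegrable (fun s : ℝ => π ^ r * s ^ (-r)) volume δ π := by
        apply ContinuousOn.intervalIntegrable
        apply ContinuousOn.mul continuousOn_const
        apply ContinuousOn.rpow_const continuousOn_id
        intro x hx
        rw [Set.uIcc_of_le hδπ] at hx
        exact Or.inl (ne_of_gt (hδpos.trans_le hx.1))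
      have hmono := intervalIntegral.integral_mono_on hδπ (hint _ _) hintg hptwise
      refine hmono.trans ?_
      rw [intervalIntegral.integral_const_mul]
      rw [integral_rpow (Or.inr ⟨by intro hcon; rw [neg_eq_iff_eq_neg] at hcon; linarith,
        by rw [Set.uIcc_of_le hδπ]; exact fun hmem => absurd hmem.1 (not_le.mpr hδpos)⟩)]
      have hδpow2 : δ ^ (-r + 1) = (2 * (N:ℝ) + 1) ^ (r - 1) := by
        rw [hδ, one_div, Real.inv_rpow hM.le, ← Real.rpow_neg hM.le,
          show -(-r + 1) = r - 1 by ring]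
      rw [hδpow2]
      have hπp : 0 < π ^ (-r + 1) := Real.rpow_pos_of_pos pi_pos _
      have heq : (π ^ (-r + 1) - (2 * (N:ℝ) + 1) ^ (r - 1)) / (-r + 1)
          = ((2 * (N:ℝ) + 1) ^ (r - 1) - π ^ (-r + 1)) / (r - 1) := by
        rw [show (-r + 1) = -(r - 1) by ring, div_neg, ← neg_div, neg_sub]
      rw [heq]
      have hA : 0 ≤ (2 * (N:ℝ) + 1) ^ (r - 1) := Real.rpow_nonneg hM.le _
      have hstep : ((2 * (N:ℝ) + 1) ^ (r - 1) - π ^ (-r + 1)) / (r - 1)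
          ≤ (2 * (N:ℝ) + 1) ^ (r - 1) / (r - 1) := by
        rw [div_le_div_iff₀ hr1 hr1]
        nlinarith [mul_pos hπp hr1]
      calc π ^ r * (((2 * (N:ℝ) + 1) ^ (r - 1) - π ^ (-r + 1)) / (r - 1))
          ≤ π ^ r * ((2 * (N:ℝ) + 1) ^ (r - 1) / (r - 1)) :=
            mul_le_mul_of_nonneg_left hstep hπr.le
        _ = π ^ r * (2 * (N:ℝ) + 1) ^ (r - 1) / (r - 1) := by ring
    have hBr : (C ^ r⁻¹) ^ r = C := Real.rpow_inv_rpow hCpos.le hrne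
    rw [hsplit, hleft, hBr]
    have hCeq : C * (2 * (N:ℝ) + 1) ^ (r - 1)
        = π ^ r * (2 * (N:ℝ) + 1) ^ (r - 1) / (r - 1) + 2 * (2 * (N:ℝ) + 1) ^ (r - 1)
          + π ^ r * (2 * (N:ℝ) + 1) ^ (r - 1) / (r - 1) := by
      rw [hC]
      field_simp
      ring
    rw [hCeq]
    linarith [hright, hmid_up]
end

section
/- Let X = {X_s}_{s ∈ [-π,π]} be a càdlàg process and τ a random time taking values in (-π, π], independent of X. Then for every κ > 1, E[|X_{τ-}|^κ] ≤ sup_{s ∈ [-π,π]} E[|X_s|^κ], where X_{τ-} denotes the left limit of the path at τ. -/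
open Real MeasureTheory Filter
open scoped ENNReal

theorem stmt7 {Ω : Type*} [MeasurableSpace Ω] (P : Measure Ω) [IsProbabilityMeasure P]
    (X : ℝ → Ω → ℝ) (hXm : ∀ s, Measurable (X s))
    (hrc : ∀ ω, ∀ t ∈ Set.Icc (-π) π,
      ContinuousWithinAt (fun s => X s ω) (Set.Ici t) t)
    (Xminus : ℝ → Ω → ℝ)
    (hll : ∀ ω, ∀ t ∈ Set.Ioc (-π) π,
      Tendsto (fun s => X s ω) (nhdsWithin t (Set.Iio t)) (nhds (Xminus t ω)))
    (τ : Ω → ℝ) (hτm : Measurable τ) (hτ : ∀ ω, τ ω ∈ Set.Ioc (-π) π)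
    (hindep : ProbabilityTheory.Indep (MeasurableSpace.comap τ inferInstance)
      (⨆ s ∈ Set.Icc (-π) π, MeasurableSpace.comap (X s) inferInstance) P)
    (κ : ℝ) (hκ : 1 < κ) :
    (∫⁻ ω, ENNReal.ofReal (|Xminus (τ ω) ω| ^ κ) ∂P) ≤
      ⨆ s ∈ Set.Icc (-π) π, ∫⁻ ω, ENNReal.ofReal (|X s ω| ^ κ) ∂P := by
  classical
  set S : ℝ≥0∞ := ⨆ s ∈ Set.Icc (-π) π, ∫⁻ ω, ENNReal.ofReal (|X s ω| ^ κ) ∂P with hS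
  set g0 : ℝ → ℝ≥0∞ := fun x => ENNReal.ofReal (|x| ^ κ) with hg0
  have hg0c : Continuous g0 :=
    ENNReal.continuous_ofReal.comp
      (continuous_abs.rpow_const (fun x => Or.inr (le_of_lt (lt_trans one_pos hκ))))
  have hg0m : Measurable g0 := hg0c.measurable
  -- dyadic-type approximations from the left
  set M : ℕ → Ω → ℤ := fun n ω => ⌈τ ω * ((n : ℝ) + 1)⌉ with hM
  set v : ℕ → ℤ → ℝ := fun n m => max (-π) (((m : ℝ) - 1) / ((n : ℝ) + 1)) with hv
  set e : ℕ → Ω → ℝ := fun n ω => v n (M n ω) with he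
  have hMm : ∀ n, Measurable (M n) := fun n => (hτm.mul_const _).ceil
  have hnpos : ∀ n : ℕ, (0 : ℝ) < (n : ℝ) + 1 := fun n => by positivity
  have h1 : ∀ (n : ℕ) (ω : Ω), e n ω < τ ω := by
    intro n ω
    refine max_lt (hτ ω).1 ?_
    rw [div_lt_iff₀ (hnpos n)]
    have := Int.ceil_lt_add_one (τ ω * ((n : ℝ) + 1))
    simp only [hM]
    linarith
  have h2 : ∀ (n : ℕ) (ω : Ω), τ ω - 1 / ((n : ℝ) + 1) ≤ e n ω := by
    intro n ω
    refine le_trans ?_ (le_max_right _ _)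
    rw [le_div_iff₀ (hnpos n)]
    have h := Int.le_ceil (τ ω * ((n : ℝ) + 1))
    have key : (1 / ((n : ℝ) + 1)) * ((n : ℝ) + 1) = 1 :=
      one_div_mul_cancel (ne_of_gt (hnpos n))
    simp only [hM]
    nlinarith
  have h4 : ∀ (n : ℕ) (ω : Ω), e n ω ∈ Set.Icc (-π) π := fun n ω =>
    ⟨le_max_left _ _, le_of_lt (lt_of_lt_of_le (h1 n ω) (hτ ω).2)⟩
  have h3 : ∀ ω, Tendsto (fun n => e n ω) atTop (nhdsWithin (τ ω) (Set.Iio (τ ω))) := by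
    intro ω
    refine tendsto_nhdsWithin_of_tendsto_nhds_of_eventually_within _ ?_
      (Eventually.of_forall fun n => h1 n ω)
    have hlo : Tendsto (fun n : ℕ => τ ω - 1 / ((n : ℝ) + 1)) atTop (nhds (τ ω)) := by
      have := tendsto_const_nhds (x := τ ω) (f := atTop (α := ℕ)) |>.sub
        tendsto_one_div_add_atTop_nhds_zero_nat
      simpa using this
    exact tendsto_of_tendsto_of_tendsto_of_le_of_le hlo tendsto_const_nhds
      (fun n => h2 n ω) (fun n => le_of_lt (h1 n ω))
  have h5 : ∀ ω, Tendsto (fun n => g0 (X (e n ω) ω)) atTop (nhds (g0 (Xminus (τ ω) ω))) := by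
    intro ω
    exact (hg0c.tendsto _).comp ((hll ω (τ ω) (hτ ω)).comp (h3 ω))
  -- measurability of the approximations
  have h6 : ∀ n, Measurable fun ω => g0 (X (e n ω) ω) := by
    intro n
    have hF : Measurable fun p : Ω × ℤ => g0 (X (v n p.2) p.1) :=
      measurable_from_prod_countable_left fun m => hg0m.comp (hXm (v n m))
    have hpair : Measurable fun ω => ((ω, M n ω) : Ω × ℤ) :=
      measurable_id.prodMk (hMm n)
    have := hF.comp hpair
    exact this
  -- key bound for each n
  have h7 : ∀ n, (∫⁻ ω, g0 (X (e n ω) ω) ∂P) ≤ S := by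
    intro n
    set A : ℤ → Set Ω := fun m => M n ⁻¹' {m} with hA
    have hAmeas : ∀ m, MeasurableSet (A m) := fun m => hMm n (measurableSet_singleton m)
    have hdisj : Pairwise (Function.onFun Disjoint A) := by
      intro m m' hmm'
      simp only [Function.onFun, hA, Set.disjoint_left]
      rintro ω (h1 : M n ω = m) (h2 : M n ω = m')
      exact hmm' (h1 ▸ h2 ▸ rfl)
    have hcover : (⋃ m, A m) = Set.univ := by
      ext ω; simp [hA]
    have hAcomap : ∀ m, MeasurableSet[MeasurableSpace.comap τ inferInstance] (A m) := by
      intro m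
      refine ⟨{x : ℝ | ⌈x * ((n : ℝ) + 1)⌉ = m}, ?_, rfl⟩
      exact (measurable_id.mul_const _).ceil (measurableSet_singleton m)
    have hstep : ∀ m, (∫⁻ ω in A m, g0 (X (e n ω) ω) ∂P) ≤ P (A m) * S := by
      intro m
      rcases Set.eq_empty_or_nonempty (A m) with hemp | ⟨ω₀, hω₀⟩
      · simp [hemp]
      · have hvmem : v n m ∈ Set.Icc (-π) π := by
          have : M n ω₀ = m := hω₀
          simpa [he, this] using h4 n ω₀
        have hcongr : (∫⁻ ω in A m, g0 (X (e n ω) ω) ∂P)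
            = ∫⁻ ω in A m, g0 (X (v n m) ω) ∂P := by
          refine setLIntegral_congr_fun (hAmeas m) ?_
          intro ω hω
          have : M n ω = m := hω
          simp [he, this]
        have hmg : Measurable[⨆ s ∈ Set.Icc (-π) π,
            MeasurableSpace.comap (X s) inferInstance] fun ω => g0 (X (v n m) ω) := by
          refine hg0m.comp ?_
          refine Measurable.of_comap_le ?_
          exact le_iSup₂ (f := fun s (_ : s ∈ Set.Icc (-π) π) =>
            MeasurableSpace.comap (X s) inferInstance) (v n m) hvmem
        have hmf : Measurable[MeasurableSpace.comap τ inferInstance]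
            ((A m).indicator fun _ => (1 : ℝ≥0∞)) :=
          measurable_const.indicator (hAcomap m)
        have hfact : (∫⁻ ω in A m, g0 (X (v n m) ω) ∂P)
            = P (A m) * ∫⁻ ω, g0 (X (v n m) ω) ∂P := by
          rw [← lintegral_indicator (hAmeas m)]
          have : ∀ ω, (A m).indicator (fun ω => g0 (X (v n m) ω)) ω
              = (A m).indicator (fun _ => (1 : ℝ≥0∞)) ω * g0 (X (v n m) ω) := by
            intro ω
            by_cases hω : ω ∈ A m <;> simp [hω]
          simp_rw [this]
          rw [ProbabilityTheory.lintegral_mul_eq_lintegral_mul_lintegral_of_independent_measurableSpace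
            hτm.comap_le (by
              refine iSup₂_le fun s hs => ?_
              exact (hXm s).comap_le) hindep hmf hmg]
          have hone : (∫⁻ ω, (A m).indicator (fun _ => (1 : ℝ≥0∞)) ω ∂P) = P (A m) := by
            exact lintegral_indicator_one (hAmeas m)
          rw [hone]
        have hle : (∫⁻ ω, g0 (X (v n m) ω) ∂P) ≤ S :=
          le_iSup₂ (f := fun s (_ : s ∈ Set.Icc (-π) π) =>
            ∫⁻ ω, g0 (X s ω) ∂P) (v n m) hvmem
        rw [hcongr, hfact]
        gcongr
    calc (∫⁻ ω, g0 (X (e n ω) ω) ∂P)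
        = ∫⁻ ω in ⋃ m, A m, g0 (X (e n ω) ω) ∂P := by rw [hcover, setLIntegral_univ]
      _ = ∑' m, ∫⁻ ω in A m, g0 (X (e n ω) ω) ∂P := lintegral_iUnion hAmeas hdisj _
      _ ≤ ∑' m, P (A m) * S := ENNReal.tsum_le_tsum hstep
      _ = (∑' m, P (A m)) * S := ENNReal.tsum_mul_right
      _ = P (⋃ m, A m) * S := by rw [measure_iUnion hdisj hAmeas]
      _ = S := by rw [hcover, measure_univ, one_mul]
  -- conclude via Fatou
  calc (∫⁻ ω, ENNReal.ofReal (|Xminus (τ ω) ω| ^ κ) ∂P)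
      = ∫⁻ ω, liminf (fun n => g0 (X (e n ω) ω)) atTop ∂P :=
        lintegral_congr fun ω => ((h5 ω).liminf_eq).symm
    _ ≤ liminf (fun n => ∫⁻ ω, g0 (X (e n ω) ω) ∂P) atTop := lintegral_liminf_le h6
    _ ≤ liminf (fun _ : ℕ => S) atTop := liminf_le_liminf (Eventually.of_forall h7)
    _ = S := liminf_const S
end
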